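/- Let f̄ ∈ C²(ℝ) be 2-periodic and set f_ℓ = f̄(εℓ). Let r ≥ 0 be an integer with ℓ_k − ℓ_{k−1} ≥ 2r+1 for all k, let C_k = {ℓ_k − r, …, ℓ_k + r}, and let (ν_k) be weights that sum piecewise affine functions exactly, i.e. Σ_{ℓ=−N+1}^N ζ_j(εℓ) = Σ_{k=−K+1}^K ν_k Σ_{ℓ∈C_k} ζ_j(εℓ) for all j, and that satisfy 0 ≤ ν_k ≤ C₀ (h_k + h_{k+1})/(ε(2r+1)) for all k and a constant C₀ ≥ 1. Assume the mesh is κ-regular for some κ ≥ 1. Then there is a constant C, depending only on the C² norm of f̄, on κ, and on C₀, such that |f̃_j − Σ_{ℓ=−N+1}^N ε f_ℓ ζ_j(εℓ)| ≤ C (h_j² + h_{j+1}²) for every j, where f̃_j = Σ_{k=−K+1}^K ν_k Σ_{ℓ∈C_k} ε f_ℓ ζ_j(εℓ). -/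

import Mathlib

private lemma per_iter (F : ℤ → ℝ) (P : ℤ) (h : ∀ l, F (l + P) = F l) :
    ∀ (m l : ℤ), F (l + P * m) = F l := by
  intro m
  induction m using Int.induction_on with
  | zero => simp
  | succ n ih =>
    intro l
    have h1 : l + P * ((n : ℤ) + 1) = (l + P * n) + P := by ring
    rw [h1, h, ih]
  | pred n ih =>
    intro l
    have h2 : F (l + P * (-(n : ℤ) - 1)) = F ((l + P * (-(n : ℤ) - 1)) + P) := (h _).symm
    have h1 : (l + P * (-(n : ℤ) - 1)) + P = l + P * (-(n : ℤ)) := by ring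
    rw [h2, h1, ih]

private lemma window_sum (F : ℤ → ℝ) (P : ℤ) (hP : 0 < P)
    (h : ∀ l, F (l + P) = F l) (a b : ℤ) :
    ∑ l ∈ Finset.Icc a (a + P - 1), F l = ∑ l ∈ Finset.Icc b (b + P - 1), F l := by
  have hP0 : P ≠ 0 := hP.ne'
  have hmem : ∀ u x : ℤ, u + (x - u) % P ∈ Finset.Icc u (u + P - 1) := by
    intro u x
    rw [Finset.mem_Icc]
    constructor
    · have := Int.emod_nonneg (x - u) hP0; omega
    · have := Int.emod_lt_of_pos (x - u) hP; omega
  have hinv : ∀ u v x : ℤ, x ∈ Finset.Icc u (u + P - 1) →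
      u + (v + (x - v) % P - u) % P = x := by
    intro u v x hx
    rw [Finset.mem_Icc] at hx
    have h1 : v + (x - v) % P - u = (x - u) + P * (-((x - v) / P)) := by
      rw [Int.emod_def]; ring
    rw [h1, Int.add_mul_emod_self_left, Int.emod_eq_of_lt (by omega) (by omega)]
    omega
  have hval : ∀ v x : ℤ, F (v + (x - v) % P) = F x := by
    intro v x
    have h1 : x = (v + (x - v) % P) + P * ((x - v) / P) := by
      rw [Int.emod_def]; ring
    calc F (v + (x - v) % P) = F ((v + (x - v) % P) + P * ((x - v) / P)) :=
          (per_iter F P h _ _).symm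
      _ = F x := by rw [← h1]
  exact Finset.sum_nbij' (fun x => b + (x - b) % P) (fun x => a + (x - a) % P)
    (fun x _ => hmem b x) (fun x _ => hmem a x)
    (fun x hx => hinv a b x hx) (fun x hx => hinv b a x hx)
    (fun x _ => (hval b x).symm)

/-- for smooth 2-periodic external forces and weights which sum
piecewise affine functions exactly (and obey the natural size bound), the
cluster summation of the external forces agrees with the exact sum up to an
error of order `h_j² + h_{j+1}²`, with a constant depending only on the C²
bound `B` of `f̄`, the mesh regularity `κ`, and the weight bound `C₀`. -/
theorem statement3 (κ C₀ B : ℝ) (hκ : 1 ≤ κ) (hC₀ : 1 ≤ C₀) (hB : 0 ≤ B) :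
    ∃ C : ℝ, 0 < C ∧
      ∀ fbar : ℝ → ℝ, ContDiff ℝ 2 fbar → (∀ x : ℝ, fbar (x + 2) = fbar x) →
        (∀ x : ℝ, |fbar x| ≤ B) → (∀ x : ℝ, |deriv fbar x| ≤ B) →
        (∀ x : ℝ, |deriv (deriv fbar) x| ≤ B) →
      ∀ (N K r : ℤ) (ε : ℝ) (L : ℤ → ℤ) (hsz : ℤ → ℝ) (ζ : ℤ → ℤ → ℝ) (ν : ℤ → ℝ),
        1 ≤ N → 1 ≤ K → 0 ≤ r → ε = (N : ℝ)⁻¹ →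
        StrictMono L → L 0 = 0 → (∀ k : ℤ, L (k + 2 * K) = L k + 2 * N) →
        (∀ k : ℤ, hsz k = ε * ((L k - L (k - 1) : ℤ) : ℝ)) →
        (∀ k : ℤ, 2 * r + 1 ≤ L k - L (k - 1)) →
        (∀ k : ℤ, κ⁻¹ * hsz (k - 1) ≤ hsz k ∧ hsz k ≤ κ * hsz (k - 1)) →
        (∀ j l : ℤ, L (j - 1) ≤ l → l ≤ L j →
          ζ j l = ((l - L (j - 1) : ℤ) : ℝ) / ((L j - L (j - 1) : ℤ) : ℝ)) →
        (∀ j l : ℤ, L j ≤ l → l ≤ L (j + 1) →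
          ζ j l = ((L (j + 1) - l : ℤ) : ℝ) / ((L (j + 1) - L j : ℤ) : ℝ)) →
        (∀ j l : ℤ, L (j + 1) < l → l < L (j - 1) + 2 * N → ζ j l = 0) →
        (∀ j l : ℤ, ζ j (l + 2 * N) = ζ j l) →
        -- the weights sum all nodal basis functions exactly
        (∀ j ∈ Finset.Icc (-K + 1) K,
          ∑ l ∈ Finset.Icc (-N + 1) N, ζ j l =
            ∑ k ∈ Finset.Icc (-K + 1) K,
              ν k * ∑ l ∈ Finset.Icc (L k - r) (L k + r), ζ j l) →
        -- size bound on the weights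
        (∀ k ∈ Finset.Icc (-K + 1) K,
          0 ≤ ν k ∧ ν k ≤ C₀ * (hsz k + hsz (k + 1)) / (ε * (2 * (r : ℝ) + 1))) →
        ∀ j ∈ Finset.Icc (-K + 1) K,
          |(∑ k ∈ Finset.Icc (-K + 1) K, ν k *
              ∑ l ∈ Finset.Icc (L k - r) (L k + r), ε * fbar (ε * (l : ℝ)) * ζ j l) -
            ∑ l ∈ Finset.Icc (-N + 1) N, ε * fbar (ε * (l : ℝ)) * ζ j l| ≤
          C * (hsz j ^ 2 + hsz (j + 1) ^ 2) := by
  refine ⟨8 * B + 1, by linarith, ?_⟩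
  intro fbar hfC2 hfper hf0 hf1 hf2 N K r ε L hsz ζ ν hN hK hr hε hLmono hL0 hLper hhsz
    hgap hreg hζa hζb hζ0 hζper hexact hν j hj
  have hNpos : (0:ℝ) < (N : ℝ) := by exact_mod_cast (by omega : (0:ℤ) < N)
  have hεpos : 0 < ε := by rw [hε]; positivity
  have hε2N : ε * (2 * (N : ℝ)) = 2 := by
    rw [hε]; field_simp
  have hLj1 : L (j - 1) < L j := hLmono (by omega)
  have hLj2 : L j < L (j + 1) := hLmono (by omega)
  -- real versions of mesh sizes
  have hdjR : hsz j = ε * ((L j : ℝ)) - ε * ((L (j - 1) : ℝ)) := by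
    rw [hhsz j]; push_cast; ring
  have hdj1R : hsz (j + 1) = ε * ((L (j + 1) : ℝ)) - ε * ((L j : ℝ)) := by
    have h1 : j + 1 - 1 = j := by ring
    rw [hhsz (j + 1), h1]; push_cast; ring
  have hcast1 : ((L (j - 1) : ℝ)) < ((L j : ℝ)) := by exact_mod_cast hLj1
  have hcast2 : ((L j : ℝ)) < ((L (j + 1) : ℝ)) := by exact_mod_cast hLj2
  have hsj_pos : 0 < hsz j := by
    rw [hdjR]
    have := mul_lt_mul_of_pos_left hcast1 hεpos
    linarith
  have hsj1_pos : 0 < hsz (j + 1) := by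
    rw [hdj1R]
    have := mul_lt_mul_of_pos_left hcast2 hεpos
    linarith
  have hε_le : ε ≤ hsz j := by
    have hX : (1:ℝ) ≤ ((L j : ℝ)) - ((L (j - 1) : ℝ)) := by
      have := hgap j
      have h1 : (1:ℤ) ≤ L j - L (j - 1) := by omega
      have h2 : ((1:ℤ):ℝ) ≤ ((L j - L (j - 1) : ℤ) : ℝ) := by exact_mod_cast h1
      push_cast at h2; linarith
    nlinarith [hdjR, hεpos]
  -- periodicity iterations
  have hζiter : ∀ (m l : ℤ), ζ j (l + 2 * N * m) = ζ j l := per_iter (ζ j) (2 * N) (hζper j)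
  have hfiter : ∀ (m : ℤ) (x : ℝ), fbar (x + 2 * (m : ℝ)) = fbar x := by
    intro m
    induction m using Int.induction_on with
    | zero => simp
    | succ n ih =>
      intro x
      have h1 : x + 2 * (((n : ℤ) + 1 : ℤ) : ℝ) = (x + 2 * ((n : ℤ) : ℝ)) + 2 := by
        push_cast; ring
      rw [h1, hfper, ih]
    | pred n ih =>
      intro x
      have h2 : fbar (x + 2 * ((-(n : ℤ) - 1 : ℤ) : ℝ)) =
          fbar ((x + 2 * ((-(n : ℤ) - 1 : ℤ) : ℝ)) + 2) := (hfper _).symm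
      have h1 : (x + 2 * ((-(n : ℤ) - 1 : ℤ) : ℝ)) + 2 = x + 2 * ((-(n : ℤ) : ℤ) : ℝ) := by
        push_cast; ring
      rw [h2, h1, ih]
  -- Lipschitz bound
  have hlip : ∀ x y : ℝ, |fbar x - fbar y| ≤ B * |x - y| := by
    have hdiff : Differentiable ℝ fbar := hfC2.differentiable (by norm_num)
    have hL : LipschitzWith ⟨B, hB⟩ fbar := by
      apply lipschitzWith_of_nnnorm_deriv_le hdiff
      intro x
      apply NNReal.coe_le_coe.mp
      show ‖deriv fbar x‖ ≤ B
      simpa [Real.norm_eq_abs] using hf1 x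
    intro x y
    have h : dist (fbar x) (fbar y) ≤ B * dist x y := hL.dist_le_mul x y
    simpa [Real.dist_eq] using h
  -- bounds on ζ j on the central interval
  have hζ01 : ∀ l : ℤ, L (j - 1) ≤ l → l ≤ L (j + 1) → 0 ≤ ζ j l ∧ ζ j l ≤ 1 := by
    intro l h1 h2
    rcases le_or_gt l (L j) with h3 | h3
    · rw [hζa j l h1 h3]
      have hden : (0:ℝ) < ((L j - L (j - 1) : ℤ) : ℝ) := by
        exact_mod_cast sub_pos.mpr hLj1
      have hnum0 : (0:ℝ) ≤ ((l - L (j - 1) : ℤ) : ℝ) := by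
        exact_mod_cast sub_nonneg.mpr h1
      constructor
      · exact div_nonneg hnum0 hden.le
      · rw [div_le_one hden]
        exact_mod_cast sub_le_sub_right h3 (L (j - 1))
    · rw [hζb j l h3.le h2]
      have hden : (0:ℝ) < ((L (j + 1) - L j : ℤ) : ℝ) := by
        exact_mod_cast sub_pos.mpr hLj2
      have hnum0 : (0:ℝ) ≤ ((L (j + 1) - l : ℤ) : ℝ) := by
        exact_mod_cast sub_nonneg.mpr h2
      constructor
      · exact div_nonneg hnum0 hden.le
      · rw [div_le_one hden]
        have : L (j + 1) - l ≤ L (j + 1) - L j := by omega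
        exact_mod_cast this
  -- decomposition into period window
  have h2N : (0:ℤ) < 2 * N := by omega
  have hdecomp : ∀ l : ℤ, ∃ l' m : ℤ, l = l' + 2 * N * m ∧ L (j - 1) ≤ l' ∧
      l' < L (j - 1) + 2 * N := by
    intro l
    refine ⟨L (j - 1) + (l - L (j - 1)) % (2 * N), (l - L (j - 1)) / (2 * N), ?_, ?_, ?_⟩
    · have := Int.mul_ediv_add_emod (l - L (j - 1)) (2 * N)
      linarith
    · have := Int.emod_nonneg (l - L (j - 1)) h2N.ne'
      linarith
    · have := Int.emod_lt_of_pos (l - L (j - 1)) h2N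
      linarith
  set c : ℝ := fbar (ε * ((L j : ℤ) : ℝ)) with hc
  -- pointwise bound
  have hQ : ∀ l : ℤ, |ε * (fbar (ε * (l : ℝ)) - c) * ζ j l| ≤
      ε * (B * (hsz j + hsz (j + 1))) * ζ j l := by
    intro l
    obtain ⟨l', m, hlm, hl1, hl2⟩ := hdecomp l
    have hζeq : ζ j l = ζ j l' := by rw [hlm]; exact hζiter m l'
    have hfeq : fbar (ε * (l : ℝ)) = fbar (ε * (l' : ℝ)) := by
      have harg : ε * ((l : ℤ) : ℝ) = ε * ((l' : ℤ) : ℝ) + 2 * (m : ℝ) := by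
        rw [hlm]; push_cast; linear_combination (m : ℝ) * hε2N
      rw [harg, hfiter m]
    rcases le_or_gt l' (L (j + 1)) with hcase | hcase
    · have hz01 := hζ01 l' hl1 hcase
      have e1 : ((L (j - 1) : ℤ) : ℝ) ≤ ((l' : ℤ) : ℝ) := by exact_mod_cast hl1
      have e2 : ((l' : ℤ) : ℝ) ≤ ((L (j + 1) : ℤ) : ℝ) := by exact_mod_cast hcase
      have habs : |ε * ((l' : ℤ) : ℝ) - ε * ((L j : ℤ) : ℝ)| ≤ hsz j + hsz (j + 1) := by
        rw [abs_le]
        constructor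
        · have := mul_le_mul_of_nonneg_left e1 hεpos.le
          linarith [hdjR, hdj1R, hsj1_pos]
        · have := mul_le_mul_of_nonneg_left e2 hεpos.le
          linarith [hdjR, hdj1R, hsj_pos]
      have hfb : |fbar (ε * ((l' : ℤ) : ℝ)) - c| ≤ B * (hsz j + hsz (j + 1)) := by
        calc |fbar (ε * ((l' : ℤ) : ℝ)) - c| ≤ B * |ε * ((l' : ℤ) : ℝ) - ε * ((L j : ℤ) : ℝ)| :=
              hlip _ _
          _ ≤ B * (hsz j + hsz (j + 1)) := mul_le_mul_of_nonneg_left habs hB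
      rw [hζeq, hfeq, abs_mul, abs_mul, abs_of_pos hεpos, abs_of_nonneg hz01.1]
      apply mul_le_mul_of_nonneg_right _ hz01.1
      exact mul_le_mul_of_nonneg_left hfb hεpos.le
    · have hz0 : ζ j l' = 0 := hζ0 j l' hcase hl2
      rw [hζeq, hz0]
      simp
  -- sum of ζ over one period
  set S : ℝ := ∑ l ∈ Finset.Icc (-N + 1) N, ζ j l with hSdef
  have hshift : S = ∑ l ∈ Finset.Icc (L (j - 1)) (L (j - 1) + 2 * N - 1), ζ j l := by
    have hw := window_sum (ζ j) (2 * N) h2N (hζper j) (-N + 1) (L (j - 1))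
    have harg : -N + 1 + (2 * N) - 1 = N := by ring
    rw [harg] at hw
    rw [hSdef, hw]
  have hsum_bound : S ≤ ((L (j + 1) - L (j - 1) : ℤ) : ℝ) + 1 := by
    rw [hshift]
    calc ∑ l ∈ Finset.Icc (L (j - 1)) (L (j - 1) + 2 * N - 1), ζ j l
        ≤ ∑ l ∈ Finset.Icc (L (j - 1)) (L (j - 1) + 2 * N - 1),
            (if l ≤ L (j + 1) then (1:ℝ) else 0) := by
          apply Finset.sum_le_sum
          intro l hl
          rw [Finset.mem_Icc] at hl
          split_ifs with hcase
          · exact (hζ01 l hl.1 hcase).2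
          · rw [hζ0 j l (lt_of_not_ge hcase) (by omega)]
      _ = (((Finset.Icc (L (j - 1)) (L (j - 1) + 2 * N - 1)).filter
            (fun l => l ≤ L (j + 1))).card : ℝ) := by
          rw [Finset.sum_boole]
      _ ≤ ((Finset.Icc (L (j - 1)) (L (j + 1))).card : ℝ) := by
          have hsub : (Finset.Icc (L (j - 1)) (L (j - 1) + 2 * N - 1)).filter
              (fun l => l ≤ L (j + 1)) ⊆ Finset.Icc (L (j - 1)) (L (j + 1)) := by
            intro x hx
            rw [Finset.mem_filter, Finset.mem_Icc] at hx
            rw [Finset.mem_Icc]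
            exact ⟨hx.1.1, hx.2⟩
          exact_mod_cast Finset.card_le_card hsub
      _ ≤ ((L (j + 1) - L (j - 1) : ℤ) : ℝ) + 1 := by
          rw [Int.card_Icc]
          have h1 : (0:ℤ) ≤ L (j + 1) + 1 - L (j - 1) := by omega
          have h2 : (((L (j + 1) + 1 - L (j - 1)).toNat : ℕ) : ℝ) =
              ((L (j + 1) + 1 - L (j - 1) : ℤ) : ℝ) := by
            rw [← Int.cast_natCast, Int.toNat_of_nonneg h1]
          rw [h2]
          push_cast
          linarith
  have hSnn : 0 ≤ S := by
    rw [hshift]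
    apply Finset.sum_nonneg
    intro l hl
    rw [Finset.mem_Icc] at hl
    rcases le_or_gt l (L (j + 1)) with hcase | hcase
    · exact (hζ01 l hl.1 hcase).1
    · rw [hζ0 j l hcase (by omega)]
  have hd : hsz j + hsz (j + 1) = ε * ((L (j + 1) - L (j - 1) : ℤ) : ℝ) := by
    rw [hdjR, hdj1R]; push_cast; ring
  have hS2d : ε * S ≤ 2 * (hsz j + hsz (j + 1)) := by
    have h1 := mul_le_mul_of_nonneg_left hsum_bound hεpos.le
    have h2 : ε * (((L (j + 1) - L (j - 1) : ℤ) : ℝ) + 1) =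
        (hsz j + hsz (j + 1)) + ε := by rw [hd]; ring
    linarith [hsj1_pos]
  -- exactness
  have hexactj := hexact j hj
  -- splitting off the constant c
  have expand : ∀ s : Finset ℤ, ∑ l ∈ s, ε * fbar (ε * (l : ℝ)) * ζ j l =
      (∑ l ∈ s, ε * (fbar (ε * (l : ℝ)) - c) * ζ j l) + ε * c * ∑ l ∈ s, ζ j l := by
    intro s
    rw [Finset.mul_sum, ← Finset.sum_add_distrib]
    exact Finset.sum_congr rfl fun l _ => by ring
  have hEq : (∑ k ∈ Finset.Icc (-K + 1) K, ν k *
        ∑ l ∈ Finset.Icc (L k - r) (L k + r), ε * fbar (ε * (l : ℝ)) * ζ j l) -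
      ∑ l ∈ Finset.Icc (-N + 1) N, ε * fbar (ε * (l : ℝ)) * ζ j l =
      (∑ k ∈ Finset.Icc (-K + 1) K, ν k *
        ∑ l ∈ Finset.Icc (L k - r) (L k + r), ε * (fbar (ε * (l : ℝ)) - c) * ζ j l) -
      ∑ l ∈ Finset.Icc (-N + 1) N, ε * (fbar (ε * (l : ℝ)) - c) * ζ j l := by
    have hA : ∑ k ∈ Finset.Icc (-K + 1) K, ν k *
          ∑ l ∈ Finset.Icc (L k - r) (L k + r), ε * fbar (ε * (l : ℝ)) * ζ j l =
        (∑ k ∈ Finset.Icc (-K + 1) K, ν k *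
          ∑ l ∈ Finset.Icc (L k - r) (L k + r), ε * (fbar (ε * (l : ℝ)) - c) * ζ j l) +
        ε * c * ∑ k ∈ Finset.Icc (-K + 1) K, ν k *
          ∑ l ∈ Finset.Icc (L k - r) (L k + r), ζ j l := by
      rw [Finset.mul_sum, ← Finset.sum_add_distrib]
      apply Finset.sum_congr rfl
      intro k _
      rw [expand]
      ring
    have hBe : ∑ l ∈ Finset.Icc (-N + 1) N, ε * fbar (ε * (l : ℝ)) * ζ j l =
        (∑ l ∈ Finset.Icc (-N + 1) N, ε * (fbar (ε * (l : ℝ)) - c) * ζ j l) +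
        ε * c * S := by
      rw [expand, hSdef]
    rw [hA, hBe, hSdef, hexactj]
    ring
  -- bound the two pieces
  have hBpart : |∑ l ∈ Finset.Icc (-N + 1) N, ε * (fbar (ε * (l : ℝ)) - c) * ζ j l| ≤
      ε * (B * (hsz j + hsz (j + 1))) * S := by
    calc |∑ l ∈ Finset.Icc (-N + 1) N, ε * (fbar (ε * (l : ℝ)) - c) * ζ j l|
        ≤ ∑ l ∈ Finset.Icc (-N + 1) N, |ε * (fbar (ε * (l : ℝ)) - c) * ζ j l| :=
          Finset.abs_sum_le_sum_abs _ _
      _ ≤ ∑ l ∈ Finset.Icc (-N + 1) N, ε * (B * (hsz j + hsz (j + 1))) * ζ j l :=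
          Finset.sum_le_sum fun l _ => hQ l
      _ = ε * (B * (hsz j + hsz (j + 1))) * S := by rw [hSdef, Finset.mul_sum]
  have hApart : |∑ k ∈ Finset.Icc (-K + 1) K, ν k *
        ∑ l ∈ Finset.Icc (L k - r) (L k + r), ε * (fbar (ε * (l : ℝ)) - c) * ζ j l| ≤
      ε * (B * (hsz j + hsz (j + 1))) * S := by
    calc |∑ k ∈ Finset.Icc (-K + 1) K, ν k *
          ∑ l ∈ Finset.Icc (L k - r) (L k + r), ε * (fbar (ε * (l : ℝ)) - c) * ζ j l|
        ≤ ∑ k ∈ Finset.Icc (-K + 1) K, |ν k *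
          ∑ l ∈ Finset.Icc (L k - r) (L k + r), ε * (fbar (ε * (l : ℝ)) - c) * ζ j l| :=
          Finset.abs_sum_le_sum_abs _ _
      _ ≤ ∑ k ∈ Finset.Icc (-K + 1) K, ν k *
          ∑ l ∈ Finset.Icc (L k - r) (L k + r), ε * (B * (hsz j + hsz (j + 1))) * ζ j l := by
          apply Finset.sum_le_sum
          intro k hk
          rw [abs_mul, abs_of_nonneg (hν k hk).1]
          apply mul_le_mul_of_nonneg_left _ (hν k hk).1
          exact (Finset.abs_sum_le_sum_abs _ _).trans
            (Finset.sum_le_sum fun l _ => hQ l)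
      _ = ε * (B * (hsz j + hsz (j + 1))) *
          ∑ k ∈ Finset.Icc (-K + 1) K, ν k *
            ∑ l ∈ Finset.Icc (L k - r) (L k + r), ζ j l := by
          rw [Finset.mul_sum]
          apply Finset.sum_congr rfl
          intro k _
          rw [← Finset.mul_sum]
          ring
      _ = ε * (B * (hsz j + hsz (j + 1))) * S := by rw [hSdef, hexactj]
  rw [hEq]
  have habs2 : |(∑ k ∈ Finset.Icc (-K + 1) K, ν k *
        ∑ l ∈ Finset.Icc (L k - r) (L k + r), ε * (fbar (ε * (l : ℝ)) - c) * ζ j l) -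
      ∑ l ∈ Finset.Icc (-N + 1) N, ε * (fbar (ε * (l : ℝ)) - c) * ζ j l| ≤
      2 * (ε * (B * (hsz j + hsz (j + 1))) * S) := by
    have := abs_sub (∑ k ∈ Finset.Icc (-K + 1) K, ν k *
        ∑ l ∈ Finset.Icc (L k - r) (L k + r), ε * (fbar (ε * (l : ℝ)) - c) * ζ j l)
      (∑ l ∈ Finset.Icc (-N + 1) N, ε * (fbar (ε * (l : ℝ)) - c) * ζ j l)
    linarith
  refine habs2.trans ?_
  have key : 2 * (B * (hsz j + hsz (j + 1))) * (ε * S) ≤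
      2 * (B * (hsz j + hsz (j + 1))) * (2 * (hsz j + hsz (j + 1))) := by
    apply mul_le_mul_of_nonneg_left hS2d
    have : 0 ≤ hsz j + hsz (j + 1) := by linarith
    positivity
  nlinarith [mul_nonneg hB (sq_nonneg (hsz j - hsz (j + 1))), sq_nonneg (hsz j),
    sq_nonneg (hsz (j + 1)), hsj_pos, hsj1_pos]
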